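/- Let F be a set functor and (Λ_i)_{i ∈ I} a non-empty family of normal lax extensions of F. The relax extension Λ given by the pointwise supremum Λr = ⋁_{i ∈ I} Λ_i r preserves composition with subidentities if and only if every Λ_i preserves composition with subidentities. -/

import Mathlib

open CategoryTheory Function

universe u

/-- Applicative composition of relations: `relComp s r = s · r`. -/
def relComp {X Y Z : Type u} (s : Y → Z → Prop) (r : X → Y → Prop) : X → Z → Prop :=
  fun x z => ∃ y, r x y ∧ s y z

/-- Converse of a relation. -/
def relConv {X Y : Type u} (r : X → Y → Prop) : Y → X → Prop := fun y x => r x y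

/-- Graph relation of a function. -/
def fgraph {X Y : Type u} (f : X → Y) : X → Y → Prop := fun x y => f x = y

/-- An `F`-relator: a monotone assignment of relations `F X ⇸ F Y` to relations `X ⇸ Y`. -/
structure Relator (F : Type u ⥤ Type u) : Type (u + 1) where
  map : ∀ {X Y : Type u}, (X → Y → Prop) → (F.obj X → F.obj Y → Prop)
  mono : ∀ {X Y : Type u} {r s : X → Y → Prop}, (∀ x y, r x y → s x y) →
    ∀ u v, map r u v → map s u v

/-- `f` is a coalgebra homomorphism from `(X, α)` to `(Y, β)`. -/
def IsCoalgHom (F : Type u ⥤ Type u) {X Y : Type u} (α : X → F.obj X) (β : Y → F.obj Y)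
    (f : X → Y) : Prop :=
  ∀ x, β (f x) = F.map (TypeCat.ofHom f) (α x)

/-- Behavioural equivalence of states. -/
def BehEq (F : Type u ⥤ Type u) {X Y : Type u} (α : X → F.obj X) (β : Y → F.obj Y)
    (x : X) (y : Y) : Prop :=
  ∃ (Z : Type u) (γ : Z → F.obj Z) (f : X → Z) (g : Y → Z),
    IsCoalgHom F α γ f ∧ IsCoalgHom F β γ g ∧ f x = g y

/-- `r` is a `Λ`-simulation from `(X, α)` to `(Y, β)`: `r ≤ β° · Λr · α`. -/
def IsSimulation {F : Type u ⥤ Type u} (Λ : Relator F) {X Y : Type u}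
    (α : X → F.obj X) (β : Y → F.obj Y) (r : X → Y → Prop) : Prop :=
  ∀ x y, r x y → Λ.map r (α x) (β y)

/-- `x` and `y` are `Λ`-similar: related by some `Λ`-simulation. -/
def Similar' {F : Type u ⥤ Type u} (Λ : Relator F) {X Y : Type u}
    (α : X → F.obj X) (β : Y → F.obj Y) (x : X) (y : Y) : Prop :=
  ∃ r, IsSimulation Λ α β r ∧ r x y

/-- `Λ` is a relax extension of `F`: `Ff ≤ Λf` and `(Ff)° ≤ Λ(f°)` for all functions `f`. -/
def IsRelaxExtension (F : Type u ⥤ Type u) (Λ : Relator F) : Prop :=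
  ∀ {X Y : Type u} (f : X → Y),
    (∀ (u : F.obj X) (v : F.obj Y), F.map (TypeCat.ofHom f) u = v → Λ.map (fgraph f) u v) ∧
    (∀ (v : F.obj Y) (u : F.obj X), F.map (TypeCat.ofHom f) u = v → Λ.map (relConv (fgraph f)) v u)

/-- `Λ` is a lax extension of `F`: a relax extension with `Λs · Λr ≤ Λ(s · r)`. -/
def IsLaxExtension (F : Type u ⥤ Type u) (Λ : Relator F) : Prop :=
  IsRelaxExtension F Λ ∧
    ∀ {X Y Z : Type u} (r : X → Y → Prop) (s : Y → Z → Prop)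
      (u : F.obj X) (w : F.obj Z),
      relComp (Λ.map s) (Λ.map r) u w → Λ.map (relComp s r) u w

/-- `Λ` is normal: `Λ1_X = 1_{FX}` for every set `X`. -/
def IsNormal (F : Type u ⥤ Type u) (Λ : Relator F) : Prop :=
  ∀ (X : Type u) (u v : F.obj X), Λ.map (@Eq X) u v ↔ u = v

/-- A subidentity is a relation contained in the identity relation. -/
def IsSubId {X : Type u} (s : X → X → Prop) : Prop := ∀ x x', s x x' → x = x'

/-- `Λ` preserves composition with subidentities:
`Λ(r · s) = Λr · Λs` and `Λ(s' · r) = Λs' · Λr` for subidentities `s`, `s'`. -/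
def PreservesSubIdComp (F : Type u ⥤ Type u) (Λ : Relator F) : Prop :=
  ∀ {X Y : Type u} (r : X → Y → Prop),
    (∀ s : X → X → Prop, IsSubId s →
      ∀ (u : F.obj X) (v : F.obj Y),
        Λ.map (relComp r s) u v ↔ relComp (Λ.map r) (Λ.map s) u v) ∧
    (∀ s' : Y → Y → Prop, IsSubId s' →
      ∀ (u : F.obj X) (v : F.obj Y),
        Λ.map (relComp s' r) u v ↔ relComp (Λ.map s') (Λ.map r) u v)

/-- The pointwise supremum of a family of relators. -/
def supRelator {F : Type u ⥤ Type u} {I : Type u} (Λi : I → Relator F) : Relator F where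
  map r u v := ∃ i, (Λi i).map r u v
  mono h u v := fun ⟨i, hi⟩ => ⟨i, (Λi i).mono h u v hi⟩

section Aux

variable {F : Type u ⥤ Type u}

/-- For a normal relator, subidentities map to subidentities. -/
lemma aux_normal_subid (Λ : Relator F) (hnorm : IsNormal F Λ) {X : Type u}
    (s : X → X → Prop) (hs : IsSubId s) : ∀ u v, Λ.map s u v → u = v := by
  intro u v h
  exact (hnorm X u v).1 (Λ.mono (fun x y hxy => hs x y hxy) u v h)

/-- For a normal lax extension, `Λ(fgraph f)` is contained in the graph of `F f`. -/
lemma aux_graph_exact (Λ : Relator F) (hlax : IsLaxExtension F Λ) (hnorm : IsNormal F Λ)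
    {X Y : Type u} (f : X → Y) (u : F.obj X) (v : F.obj Y)
    (h : Λ.map (fgraph f) u v) : F.map (TypeCat.ofHom f) u = v := by
  have hc : Λ.map (relConv (fgraph f)) (F.map (TypeCat.ofHom f) u) u := (hlax.1 f).2 _ u rfl
  have hcomp : Λ.map (relComp (fgraph f) (relConv (fgraph f))) (F.map (TypeCat.ofHom f) u) v :=
    hlax.2 _ _ _ _ ⟨u, hc, h⟩
  refine (hnorm Y _ v).1 (Λ.mono ?_ _ _ hcomp)
  rintro y y' ⟨x, hx1, hx2⟩
  exact hx1 ▸ hx2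

/-- The first coprojection `X → X ⊔ (X \ A)`. -/
def k1fun {X : Type u} (s : X → X → Prop) : X → (X ⊕ {x : X // ¬ s x x}) := Sum.inl

open Classical in
/-- The second coprojection `X → X ⊔ (X \ A)`, identifying `A` with the first copy. -/
noncomputable def k2fun {X : Type u} (s : X → X → Prop) : X → (X ⊕ {x : X // ¬ s x x}) :=
  fun x => if h : s x x then Sum.inl x else Sum.inr ⟨x, h⟩


lemma aux_k_eq_iff {X : Type u} (s : X → X → Prop) (x x' : X) :
    k1fun s x = k2fun s x' ↔ (x = x' ∧ s x' x') := by
  unfold k1fun k2fun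
  by_cases h : s x' x' <;> simp [h]

/-- A relator with enough normality properties that preserves composition with
subidentities equalizes the two coprojections on `Λ s`-diagonal elements. -/
lemma aux_key_upper (Λ : Relator F)
    (hrelax : IsRelaxExtension F Λ)
    (hsub : ∀ {X : Type u} (s : X → X → Prop), IsSubId s → ∀ u v, Λ.map s u v → u = v)
    (hgr : ∀ {X Y : Type u} (f : X → Y) (u : F.obj X) (v : F.obj Y),
      Λ.map (fgraph f) u v → F.map (TypeCat.ofHom f) u = v)
    (hpres : PreservesSubIdComp F Λ)
    {X : Type u} (s : X → X → Prop) (hs : IsSubId s) (u : F.obj X)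
    (hu : Λ.map s u u) :
    F.map (TypeCat.ofHom (k1fun s)) u = F.map (TypeCat.ofHom (k2fun s)) u := by
  have h1 : Λ.map (relComp (fgraph (k1fun s)) s) u (F.map (TypeCat.ofHom (k1fun s)) u) :=
    ((hpres (fgraph (k1fun s))).1 s hs u _).2 ⟨u, hu, (hrelax (k1fun s)).1 u _ rfl⟩
  have h2 : Λ.map (relComp (fgraph (k2fun s)) s) u (F.map (TypeCat.ofHom (k1fun s)) u) := by
    refine Λ.mono ?_ _ _ h1
    rintro x y ⟨w, hsw, hk1⟩
    have hxw : x = w := hs x w hsw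
    subst hxw
    refine ⟨x, hsw, ?_⟩
    have hsx : s x x := hsw
    have hkk : k1fun s x = k2fun s x := (aux_k_eq_iff s x x).2 ⟨rfl, hsx⟩
    show k2fun s x = y
    exact hkk.symm.trans hk1
  obtain ⟨w, hsw, hk2⟩ := ((hpres (fgraph (k2fun s))).1 s hs u _).1 h2
  have huw : u = w := hsub s hs u w hsw
  subst huw
  exact (hgr (k2fun s) u _ hk2).symm

/-- Conversely, any lax extension relates `u` to itself under `Λ s` whenever the
coprojections are equalized at `u`. -/
lemma aux_key_lower (Λ : Relator F) (hlax : IsLaxExtension F Λ)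
    {X : Type u} (s : X → X → Prop) (hs : IsSubId s) (u : F.obj X)
    (h : F.map (TypeCat.ofHom (k1fun s)) u = F.map (TypeCat.ofHom (k2fun s)) u) : Λ.map s u u := by
  have a : Λ.map (fgraph (k1fun s)) u (F.map (TypeCat.ofHom (k1fun s)) u) := (hlax.1 (k1fun s)).1 u _ rfl
  have b : Λ.map (relConv (fgraph (k2fun s))) (F.map (TypeCat.ofHom (k1fun s)) u) u :=
    (hlax.1 (k2fun s)).2 _ u h.symm
  have hcomp : Λ.map (relComp (relConv (fgraph (k2fun s))) (fgraph (k1fun s))) u u :=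
    hlax.2 _ _ _ _ ⟨F.map (TypeCat.ofHom (k1fun s)) u, a, b⟩
  refine Λ.mono ?_ _ _ hcomp
  rintro x x' ⟨y, hk1, hk2⟩
  have : k1fun s x = k2fun s x' := hk1.trans hk2.symm
  obtain ⟨hxx', hsx'⟩ := (aux_k_eq_iff s x x').1 this
  exact hxx' ▸ hsx'

end Aux

/-- The pointwise supremum of a non-empty family of normal lax
extensions of `F` preserves composition with subidentities iff each member of the
family preserves composition with subidentities. -/
theorem stmt9 (F : Type u ⥤ Type u) {I : Type u} (hne : Nonempty I)
    (Λi : I → Relator F)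
    (h : ∀ i, IsLaxExtension F (Λi i) ∧ IsNormal F (Λi i)) :
    PreservesSubIdComp F (supRelator Λi) ↔ ∀ i, PreservesSubIdComp F (Λi i) := by
  -- properties of the sup relator
  have hsub_sup : ∀ {X : Type u} (s : X → X → Prop), IsSubId s →
      ∀ u v, (supRelator Λi).map s u v → u = v := by
    intro X s hs u v hv
    obtain ⟨j, hj⟩ := hv
    exact aux_normal_subid (Λi j) (h j).2 s hs u v hj
  have hgr_sup : ∀ {X Y : Type u} (f : X → Y) (u : F.obj X) (v : F.obj Y),
      (supRelator Λi).map (fgraph f) u v → F.map (TypeCat.ofHom f) u = v := by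
    intro X Y f u v hv
    obtain ⟨j, hj⟩ := hv
    exact aux_graph_exact (Λi j) (h j).1 (h j).2 f u v hj
  have hrelax_sup : IsRelaxExtension F (supRelator Λi) := by
    intro X Y f
    obtain ⟨j⟩ := hne
    exact ⟨fun u v huv => ⟨j, ((h j).1.1 f).1 u v huv⟩,
      fun v u huv => ⟨j, ((h j).1.1 f).2 v u huv⟩⟩
  constructor
  · -- sup preserves ⇒ each preserves
    intro hpres i
    intro X Y r
    constructor
    · intro s hs u v
      constructor
      · intro h1
        have hrs : Λi i |>.map r u v := by
          refine (Λi i).mono ?_ _ _ h1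
          rintro x y ⟨w, hsw, hrw⟩
          exact (hs x w hsw) ▸ hrw
        obtain ⟨w, hsw, -⟩ := ((hpres r).1 s hs u v).1 ⟨i, h1⟩
        have huw : u = w := hsub_sup s hs u w hsw
        subst huw
        have heq := aux_key_upper (supRelator Λi) hrelax_sup @hsub_sup @hgr_sup hpres
          s hs u hsw
        have hsi : (Λi i).map s u u := aux_key_lower (Λi i) (h i).1 s hs u heq
        exact ⟨u, hsi, hrs⟩
      · rintro ⟨w, hsw, hrw⟩
        exact (h i).1.2 s r u v ⟨w, hsw, hrw⟩
    · intro s' hs' u v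
      constructor
      · intro h1
        have hrs : (Λi i).map r u v := by
          refine (Λi i).mono ?_ _ _ h1
          rintro x y ⟨w, hrw, hs'w⟩
          exact (hs' w y hs'w) ▸ hrw
        obtain ⟨w, -, hs'w⟩ := ((hpres r).2 s' hs' u v).1 ⟨i, h1⟩
        have hvw : v = w := (hsub_sup s' hs' w v hs'w).symm
        subst hvw
        have heq := aux_key_upper (supRelator Λi) hrelax_sup @hsub_sup @hgr_sup hpres
          s' hs' v hs'w
        have hsi : (Λi i).map s' v v := aux_key_lower (Λi i) (h i).1 s' hs' v heq
        exact ⟨v, hrs, hsi⟩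
      · rintro ⟨w, hrw, hs'w⟩
        exact (h i).1.2 r s' u v ⟨w, hrw, hs'w⟩
  · -- each preserves ⇒ sup preserves
    intro hall
    intro X Y r
    constructor
    · intro s hs u v
      constructor
      · rintro ⟨i, hi⟩
        obtain ⟨w, hsw, hrw⟩ := ((hall i r).1 s hs u v).1 hi
        exact ⟨w, ⟨i, hsw⟩, ⟨i, hrw⟩⟩
      · rintro ⟨w, ⟨i, hsw⟩, ⟨j, hrw⟩⟩
        have huw : u = w := aux_normal_subid (Λi i) (h i).2 s hs u w hsw
        subst huw
        have heq := aux_key_upper (Λi i) (h i).1.1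
          (aux_normal_subid (Λi i) (h i).2)
          (aux_graph_exact (Λi i) (h i).1 (h i).2) (hall i) s hs u hsw
        have hsj : (Λi j).map s u u := aux_key_lower (Λi j) (h j).1 s hs u heq
        exact ⟨j, ((hall j r).1 s hs u v).2 ⟨u, hsj, hrw⟩⟩
    · intro s' hs' u v
      constructor
      · rintro ⟨i, hi⟩
        obtain ⟨w, hrw, hs'w⟩ := ((hall i r).2 s' hs' u v).1 hi
        exact ⟨w, ⟨i, hrw⟩, ⟨i, hs'w⟩⟩
      · rintro ⟨w, ⟨j, hrw⟩, ⟨i, hs'w⟩⟩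
        have hvw : v = w := (aux_normal_subid (Λi i) (h i).2 s' hs' w v hs'w).symm
        subst hvw
        have heq := aux_key_upper (Λi i) (h i).1.1
          (aux_normal_subid (Λi i) (h i).2)
          (aux_graph_exact (Λi i) (h i).1 (h i).2) (hall i) s' hs' v hs'w
        have hs'j : (Λi j).map s' v v := aux_key_lower (Λi j) (h j).1 s' hs' v heq
        exact ⟨j, ((hall j r).2 s' hs' u v).2 ⟨v, hrw, hs'j⟩⟩
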